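/- arXiv:0801.3228 — 3 statements merged into one kernel-verified Lean document; each statement's English description precedes it below -/
import Mathlib

section
/- A two-qubit density matrix ρ (a 4×4 positive semidefinite complex matrix with trace 1) satisfying (U⊗U)ρ(U†⊗U†)=ρ for all 2×2 unitary matrices U is determined by a single real parameter: ρ = p·P_sym/3 + (1−p)·P_asym, where P_sym and P_asym are the projectors onto the symmetric (3-dimensional) and antisymmetric (1-dimensional) subspaces of ℂ²⊗ℂ², and p ∈ [0,1]. -/
open Matrix
open scoped Kronecker ComplexOrder

/-- The SWAP operator on ℂ² ⊗ ℂ², as a matrix indexed by `Fin 2 × Fin 2`. -/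
def swapMat : Matrix (Fin 2 × Fin 2) (Fin 2 × Fin 2) ℂ :=
  fun p q => if p.1 = q.2 ∧ p.2 = q.1 then 1 else 0

/-- Projector onto the symmetric subspace of ℂ² ⊗ ℂ². -/
noncomputable def Psym : Matrix (Fin 2 × Fin 2) (Fin 2 × Fin 2) ℂ :=
  (1 / 2 : ℂ) • (1 + swapMat)

/-- Projector onto the antisymmetric subspace of ℂ² ⊗ ℂ². -/
noncomputable def Pasym : Matrix (Fin 2 × Fin 2) (Fin 2 × Fin 2) ℂ :=
  (1 / 2 : ℂ) • (1 - swapMat)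

set_option maxHeartbeats 2000000 in
/-- A two-qubit density matrix invariant under all `U ⊗ U` conjugations is a Werner
state: `ρ = p • Psym/3 + (1-p) • Pasym` for a single parameter `p ∈ [0,1]`. -/
theorem werner_states (ρ : Matrix (Fin 2 × Fin 2) (Fin 2 × Fin 2) ℂ)
    (hpsd : ρ.PosSemidef) (htr : ρ.trace = 1)
    (hinv : ∀ U ∈ Matrix.unitaryGroup (Fin 2) ℂ, (U ⊗ₖ U) * ρ * (U ⊗ₖ U)ᴴ = ρ) :
    ∃ p : ℝ, 0 ≤ p ∧ p ≤ 1 ∧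
      ρ = ((p : ℂ) / 3) • Psym + ((1 - p : ℝ) : ℂ) • Pasym := by
  have hD : (Matrix.of ![![(1:ℂ),0],![0,Complex.I]]) ∈ Matrix.unitaryGroup (Fin 2) ℂ := by
    rw [Matrix.mem_unitaryGroup_iff]
    ext i j
    fin_cases i <;> fin_cases j <;>
      simp [Matrix.mul_apply, Fin.sum_univ_two, Matrix.one_apply, Complex.ext_iff]
  have hX : (Matrix.of ![![(0:ℂ),1],![1,0]]) ∈ Matrix.unitaryGroup (Fin 2) ℂ := by
    rw [Matrix.mem_unitaryGroup_iff]
    ext i j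
    fin_cases i <;> fin_cases j <;>
      simp [Matrix.mul_apply, Fin.sum_univ_two, Matrix.one_apply, Complex.ext_iff]
  have hR : (Matrix.of ![![(3/5:ℂ),4/5],![-4/5,3/5]]) ∈ Matrix.unitaryGroup (Fin 2) ℂ := by
    rw [Matrix.mem_unitaryGroup_iff]
    ext i j
    fin_cases i <;> fin_cases j <;>
      · simp [Matrix.mul_apply, Fin.sum_univ_two, Matrix.one_apply, map_div₀, map_neg,
          Complex.conj_ofNat]
        ring_nf
  have hDe := hinv _ hD
  have hXe := hinv _ hX
  have hRe := hinv _ hR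
  -- zero entries from phase invariance
  have Z : ∀ p q : Fin 2 × Fin 2, (p.1.val + p.2.val ≠ q.1.val + q.2.val) → ρ p q = 0 := by
    intro p q hw
    have h := congrFun (congrFun hDe p) q
    fin_cases p <;> fin_cases q <;> simp at hw <;>
    · simp only [Matrix.mul_apply, Matrix.kroneckerMap_apply, Fintype.sum_prod_type,
        Fin.sum_univ_two, Matrix.conjTranspose_apply] at h
      norm_num [Complex.ext_iff] at h ⊢
      first
      | exact h
      | constructor <;> linarith [h.1, h.2]
  have z1 : ρ 0 (0,1) = 0 := Z _ _ (by decide)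
  have z2 : ρ 0 (1,0) = 0 := Z _ _ (by decide)
  have z3 : ρ 0 1 = 0 := Z _ _ (by decide)
  have z4 : ρ (0,1) 0 = 0 := Z _ _ (by decide)
  have z5 : ρ (1,0) 0 = 0 := Z _ _ (by decide)
  have z6 : ρ 1 0 = 0 := Z _ _ (by decide)
  have z7 : ρ (0,1) 1 = 0 := Z _ _ (by decide)
  have z8 : ρ (1,0) 1 = 0 := Z _ _ (by decide)
  have z9 : ρ 1 (0,1) = 0 := Z _ _ (by decide)
  have z10 : ρ 1 (1,0) = 0 := Z _ _ (by decide)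
  -- X relations
  have x1 := congrFun (congrFun hXe ((1:Fin 2),(1:Fin 2))) ((1:Fin 2),(1:Fin 2))
  have xa := congrFun (congrFun hXe ((1:Fin 2),(0:Fin 2))) ((1:Fin 2),(0:Fin 2))
  have xb := congrFun (congrFun hXe ((1:Fin 2),(0:Fin 2))) ((0:Fin 2),(1:Fin 2))
  simp only [Matrix.mul_apply, Matrix.kroneckerMap_apply, Fintype.sum_prod_type,
    Fin.sum_univ_two, Matrix.conjTranspose_apply] at x1 xa xb
  norm_num [Prod.mk_zero_zero, Prod.mk_one_one] at x1 xa xb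
  -- x1 : ρ 0 0 = ρ 1 1, xa : ρ (0,1) (0,1) = ρ (1,0) (1,0), xb : ρ (0,1) (1,0) = ρ (1,0) (0,1)
  -- rotation relation : d = a + b
  have key : ρ 0 0 = ρ (0,1) (0,1) + ρ (0,1) (1,0) := by
    have r1 := congrFun (congrFun hRe ((0:Fin 2),(0:Fin 2))) ((0:Fin 2),(0:Fin 2))
    simp only [Matrix.mul_apply, Matrix.kroneckerMap_apply, Fintype.sum_prod_type,
      Fin.sum_univ_two, Matrix.conjTranspose_apply] at r1
    norm_num [map_div₀, map_neg, Complex.conj_ofNat, Prod.mk_zero_zero, Prod.mk_one_one] at r1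
    rw [z1, z2, z3, z4, z5, z6, z7, z8, z9, z10, ← xa, ← xb] at r1
    linear_combination (-625/288 : ℂ) * r1 - (256/288 : ℂ) * x1
  -- trace
  have tr : ρ 0 0 + ρ (0,1) (0,1) + ρ (1,0) (1,0) + ρ 1 1 = 1 := by
    rw [Matrix.trace] at htr
    simpa [Matrix.diag, Fintype.sum_prod_type, Fin.sum_univ_two, add_assoc, Prod.mk_zero_zero,
      Prod.mk_one_one] using htr
  -- positivity facts
  have hd : (0:ℂ) ≤ ρ 0 0 := by
    have h := hpsd.dotProduct_mulVec_nonneg (Pi.single 0 1)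
    simpa [dotProduct, Matrix.mulVec, Fintype.sum_prod_type, Fin.sum_univ_two,
      Pi.single_apply] using h
  have hd_re : 0 ≤ (ρ 0 0).re := by rw [Complex.le_def] at hd; simpa using hd.1
  have hd_im : (ρ 0 0).im = 0 := by rw [Complex.le_def] at hd; simpa using hd.2.symm
  have hab_re : 0 ≤ (ρ (0,1) (0,1)).re - (ρ (0,1) (1,0)).re - (ρ (1,0) (0,1)).re
      + (ρ (1,0) (1,0)).re := by
    have h := hpsd.dotProduct_mulVec_nonneg (fun q => if q = (0,1) then 1 else if q = (1,0) then -1 else 0)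
    simp [dotProduct, Matrix.mulVec, Fintype.sum_prod_type, Fin.sum_univ_two,
      Prod.ext_iff] at h
    rw [Complex.le_def] at h
    simp at h
    linarith [h.1]
  have ha_im : (ρ (0,1) (0,1)).im = 0 := by
    have h := congrFun (congrFun hpsd.1 ((0:Fin 2),(1:Fin 2))) ((0:Fin 2),(1:Fin 2))
    simp [Matrix.conjTranspose_apply, Complex.ext_iff] at h
    linarith [h]
  have hb_im : (ρ (0,1) (1,0)).im = -(ρ (1,0) (0,1)).im := by
    have h := congrFun (congrFun hpsd.1 ((1:Fin 2),(0:Fin 2))) ((0:Fin 2),(1:Fin 2))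
    simp [Matrix.conjTranspose_apply, Complex.ext_iff] at h
    linarith [h.2]
  -- split complex relations into real parts
  rw [Complex.ext_iff] at key tr x1 xa xb
  obtain ⟨key_re, key_im⟩ := key
  obtain ⟨tr_re, tr_im⟩ := tr
  obtain ⟨x1_re, x1_im⟩ := x1
  obtain ⟨xa_re, xa_im⟩ := xa
  obtain ⟨xb_re, xb_im⟩ := xb
  simp only [Complex.add_re, Complex.add_im, Complex.one_re, Complex.one_im]
    at tr_re tr_im key_re key_im
  refine ⟨3 * (ρ 0 0).re, by linarith, by linarith, ?_⟩
  ext p q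
  fin_cases p <;> fin_cases q <;>
  · norm_num [Psym, Pasym, swapMat, Matrix.one_apply, Matrix.add_apply, Matrix.smul_apply,
      Matrix.sub_apply, smul_eq_mul, Prod.ext_iff, Prod.fst_one, Prod.snd_one, Prod.fst_zero,
      Prod.snd_zero, Fin.ext_iff, Prod.mk_zero_zero, Prod.mk_one_one]
    first
    | exact Z _ _ (by decide)
    | (rw [Complex.ext_iff]
       constructor <;>
       · simp [Complex.add_re, Complex.add_im, Complex.mul_re, Complex.mul_im,
           Complex.div_re, Complex.div_im, Complex.ofReal_re, Complex.ofReal_im]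
         linarith [key_re, key_im, tr_re, tr_im, x1_re, x1_im, xa_re, xa_im, xb_re, xb_im,
           hd_re, hd_im, hab_re, ha_im, hb_im])
end

section
/- (Projection Lemma, specialized) With the hypotheses of the projection lemma, if J = 8‖H₁‖² + 2‖H₁‖ and ‖H₁‖ ≥ 1, then λ(H₁|_𝒮) − 1/8 ≤ λ(H₁+H₂). -/
/-- The smallest eigenvalue of an operator on a complex inner product space:
the infimum of the real points of its spectrum. -/
noncomputable def minEig {E : Type*} [NormedAddCommGroup E] [InnerProductSpace ℂ E]
    (A : E →L[ℂ] E) : ℝ :=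
  sInf {t : ℝ | (t : ℂ) ∈ spectrum ℂ A}

/-- The compression `P_𝒮 H₁ P_𝒮` of an operator to a subspace `𝒮`, as an operator on `𝒮`. -/
noncomputable def compress {E : Type*} [NormedAddCommGroup E] [InnerProductSpace ℂ E]
    (S : Submodule ℂ E) [S.HasOrthogonalProjection] (A : E →L[ℂ] E) : S →L[ℂ] S :=
  (S.orthogonalProjectionOnto) ∘L A ∘L S.subtypeL

section Helpers

open RCLike ContinuousLinearMap

variable {E : Type*} [NormedAddCommGroup E] [InnerProductSpace ℂ E]

local notation "⟪" x ", " y "⟫" => @inner ℂ _ _ x y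

lemma mem_spectrum_of_hasEigenvalue' {A : E →L[ℂ] E} {μ : ℂ}
    (h : Module.End.HasEigenvalue (A : E →ₗ[ℂ] E) μ) : μ ∈ spectrum ℂ A := by
  obtain ⟨v, hv⟩ := h.exists_hasEigenvector
  rw [spectrum.mem_iff]
  intro hu
  have hAv : A v = μ • v := hv.apply_eq_smul
  obtain ⟨u, hu⟩ := hu
  have h0 : (↑u : E →L[ℂ] E) v = 0 := by
    rw [hu]; simp [ContinuousLinearMap.sub_apply, Algebra.algebraMap_eq_smul_one, hAv]
  have h2 : ((↑u⁻¹ * ↑u : E →L[ℂ] E)) v = v := by rw [u.inv_mul]; rfl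
  rw [ContinuousLinearMap.mul_apply, h0, map_zero] at h2
  exact hv.2 h2.symm

lemma hasEigenvalue_of_mem_spectrum' [FiniteDimensional ℂ E] {A : E →L[ℂ] E} {μ : ℂ}
    (h : μ ∈ spectrum ℂ A) : Module.End.HasEigenvalue (A : E →ₗ[ℂ] E) μ := by
  by_contra hc
  rw [Module.End.hasEigenvalue_iff] at hc
  push_neg at hc
  set B : E →L[ℂ] E := algebraMap ℂ (E →L[ℂ] E) μ - A with hB
  have hinj : Function.Injective (B : E →ₗ[ℂ] E) := by
    rw [← LinearMap.ker_eq_bot, LinearMap.ker_eq_bot']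
    intro x hx
    have hx' : A x = μ • x := by
      have : μ • x - A x = 0 := by
        simpa [hB, Algebra.algebraMap_eq_smul_one] using hx
      linear_combination (norm := module) -this
    have : x ∈ Module.End.eigenspace (A : E →ₗ[ℂ] E) μ :=
      Module.End.mem_eigenspace_iff.mpr hx'
    rwa [hc, Submodule.mem_bot] at this
  have hsurj : Function.Surjective (B : E →ₗ[ℂ] E) :=
    (LinearMap.injective_iff_surjective).mp hinj
  let e : E ≃L[ℂ] E :=
    (LinearEquiv.ofBijective (B : E →ₗ[ℂ] E) ⟨hinj, hsurj⟩).toContinuousLinearEquiv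
  have : IsUnit B := ⟨e.toUnit, by ext x; rfl⟩
  exact (spectrum.mem_iff.mp h) this

lemma bddBelow_spec (A : E →L[ℂ] E) [CompleteSpace E] [Nontrivial E] :
    BddBelow {t : ℝ | (t : ℂ) ∈ spectrum ℂ A} := by
  refine ⟨-‖A‖, fun t ht => ?_⟩
  have := spectrum.norm_le_norm_of_mem (𝕜 := ℂ) ht
  rw [Complex.norm_real] at this
  have := neg_abs_le t
  linarith [abs_le.mp (by rwa [Real.norm_eq_abs] at *)]

lemma minEig_le_inner [FiniteDimensional ℂ E] {A : E →L[ℂ] E}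
    (hA : IsSelfAdjoint A) {v : E} (hv : ‖v‖ = 1) :
    minEig A ≤ (⟪v, A v⟫).re := by
  haveI : CompleteSpace E := FiniteDimensional.complete ℂ E
  have hv0 : v ≠ 0 := fun h => by simp [h] at hv
  haveI : Nontrivial E := ⟨v, 0, hv0⟩
  have hbdd : ∀ x : {x : E // x ≠ 0},
      -‖A‖ ≤ RCLike.re ⟪(A : E →ₗ[ℂ] E) x, (x : E)⟫ / ‖(x : E)‖ ^ 2 := by
    rintro ⟨x, hx⟩
    have hx0 : (0:ℝ) < ‖x‖ := norm_pos_iff.mpr hx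
    have hx2 : (0:ℝ) < ‖x‖ ^ 2 := by positivity
    rw [le_div_iff₀ hx2]
    have h1 : |RCLike.re ⟪(A : E →ₗ[ℂ] E) x, x⟫| ≤ ‖A‖ * ‖x‖ ^ 2 := by
      calc |RCLike.re ⟪A x, x⟫| ≤ ‖⟪A x, x⟫‖ := abs_re_le_norm _
        _ ≤ ‖A x‖ * ‖x‖ := norm_inner_le_norm _ _
        _ ≤ ‖A‖ * ‖x‖ * ‖x‖ := by
            have := A.le_opNorm x
            gcongr
        _ = ‖A‖ * ‖x‖ ^ 2 := by ring
    nlinarith [neg_abs_le (RCLike.re ⟪(A : E →ₗ[ℂ] E) x, (x:E)⟫)]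
  set r : ℝ := ⨅ x : {x : E // x ≠ 0}, RCLike.re ⟪(A : E →ₗ[ℂ] E) x, (x : E)⟫ / ‖(x : E)‖ ^ 2 with hr
  have h1 : Module.End.HasEigenvalue (A : E →ₗ[ℂ] E) (r : ℂ) :=
    hA.isSymmetric.hasEigenvalue_iInf_of_finiteDimensional
  have h2 : minEig A ≤ r := csInf_le (bddBelow_spec A) (mem_spectrum_of_hasEigenvalue' h1)
  refine h2.trans ?_
  have h3 : r ≤ RCLike.re ⟪(A : E →ₗ[ℂ] E) v, v⟫ / ‖v‖ ^ 2 :=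
    ciInf_le ⟨-‖A‖, by rintro y ⟨x, rfl⟩; exact hbdd x⟩ (⟨v, hv0⟩ : {x : E // x ≠ 0})
  rw [hv] at h3
  simpa [inner_re_symm] using h3

lemma le_minEig [FiniteDimensional ℂ E] [Nontrivial E] {A : E →L[ℂ] E}
    (hA : IsSelfAdjoint A) {c : ℝ}
    (h : ∀ v : E, ‖v‖ = 1 → c ≤ (⟪v, A v⟫).re) : c ≤ minEig A := by
  haveI : CompleteSpace E := FiniteDimensional.complete ℂ E
  apply le_csInf
  · obtain ⟨z, hz⟩ := spectrum.nonempty A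
    refine ⟨z.re, ?_⟩
    show ((z.re : ℝ) : ℂ) ∈ spectrum ℂ A
    rwa [← hA.mem_spectrum_eq_re hz]
  · rintro t ht
    obtain ⟨v, hv⟩ := (hasEigenvalue_of_mem_spectrum' ht).exists_hasEigenvector
    have hv0 : v ≠ 0 := hv.2
    have hn0 : (0:ℝ) < ‖v‖ := norm_pos_iff.mpr hv0
    set u : E := ((‖v‖ : ℂ))⁻¹ • v with hu
    have hu1 : ‖u‖ = 1 := by
      rw [hu, norm_smul]
      simp [norm_inv, hn0.ne']
    have hAu : A u = (t : ℂ) • u := by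
      have : A v = (t : ℂ) • v := hv.apply_eq_smul
      rw [hu, map_smul, this, smul_comm]
    have := h u hu1
    have heq : (⟪u, A u⟫).re = t := by
      rw [hAu, inner_smul_right, inner_self_eq_norm_sq_to_K, hu1]
      simp
    linarith [heq ▸ this]

lemma minEig_smul_le [FiniteDimensional ℂ E] {A : E →L[ℂ] E}
    (hA : IsSelfAdjoint A) (x : E) :
    minEig A * ‖x‖ ^ 2 ≤ (⟪x, A x⟫).re := by
  rcases eq_or_ne x 0 with rfl | hx
  · simp
  · have hn0 : (0:ℝ) < ‖x‖ := norm_pos_iff.mpr hx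
    set u : E := ((‖x‖ : ℂ))⁻¹ • x with hu
    have hu1 : ‖u‖ = 1 := by
      rw [hu, norm_smul]; simp [norm_inv, hn0.ne']
    have h1 := minEig_le_inner hA hu1
    have h2 : (⟪u, A u⟫).re = ‖x‖⁻¹ * (‖x‖⁻¹ * (⟪x, A x⟫).re) := by
      rw [hu, map_smul, inner_smul_right, inner_smul_left, map_inv₀, Complex.conj_ofReal,
        ← Complex.ofReal_inv, Complex.re_ofReal_mul, Complex.re_ofReal_mul]
    rw [h2] at h1
    have hc : ‖x‖ * ‖x‖⁻¹ = 1 := mul_inv_cancel₀ hn0.ne'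
    have h3 := mul_le_mul_of_nonneg_left h1 (le_of_lt (by positivity : (0:ℝ) < ‖x‖ ^ 2))
    calc minEig A * ‖x‖ ^ 2 = ‖x‖ ^ 2 * minEig A := by ring
      _ ≤ ‖x‖ ^ 2 * (‖x‖⁻¹ * (‖x‖⁻¹ * (⟪x, A x⟫).re)) := h3
      _ = (‖x‖ * ‖x‖⁻¹) * (‖x‖ * ‖x‖⁻¹) * (⟪x, A x⟫).re := by ring
      _ = (⟪x, A x⟫).re := by rw [hc]; ring

lemma compress_apply (S : Submodule ℂ E) [S.HasOrthogonalProjection] (A : E →L[ℂ] E) (x : S) :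
    compress S A x = S.orthogonalProjectionOnto (A (x : E)) := rfl

lemma inner_compress (S : Submodule ℂ E) [S.HasOrthogonalProjection] (A : E →L[ℂ] E) (x y : S) :
    ⟪x, compress S A y⟫ = ⟪(x : E), A (y : E)⟫ := by
  rw [compress_apply, Submodule.coe_inner]
  exact (Submodule.coe_inner S _ _).symm.trans (Submodule.inner_orthogonalProjectionOnto_eq_of_mem_left x (A y))

lemma compress_isSelfAdjoint [CompleteSpace E] (S : Submodule ℂ E) [S.HasOrthogonalProjection]
    [CompleteSpace S] {A : E →L[ℂ] E} (hA : IsSelfAdjoint A) :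
    IsSelfAdjoint (compress S A) := by
  rw [ContinuousLinearMap.isSelfAdjoint_iff_isSymmetric]
  intro x y
  simp only [ContinuousLinearMap.coe_coe]
  have h1 : ⟪compress S A x, y⟫ = ⟪A (x : E), (y : E)⟫ := by
    rw [← inner_conj_symm, inner_compress]
    exact inner_conj_symm _ _
  rw [h1, inner_compress]
  exact hA.isSymmetric _ _

lemma minEig_subsingleton {F : Type*} [NormedAddCommGroup F] [InnerProductSpace ℂ F]
    [Subsingleton F] (B : F →L[ℂ] F) : minEig B = 0 := by
  have h : {t : ℝ | (t : ℂ) ∈ spectrum ℂ B} = ∅ := by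
    ext t
    simp only [Set.mem_setOf_eq, Set.mem_empty_iff_false, iff_false]
    rw [spectrum.mem_iff]
    push_neg
    exact isUnit_of_subsingleton _
  rw [minEig, h, Real.sInf_empty]

lemma gap_bound [FiniteDimensional ℂ E] {A : E →L[ℂ] E} (hA : IsSelfAdjoint A)
    {J : ℝ} (hgap : ∀ t : ℝ, (t : ℂ) ∈ spectrum ℂ A → t ≠ 0 → J ≤ t)
    {w : E} (hw : w ∈ (LinearMap.ker (A : E →ₗ[ℂ] E))ᗮ) :
    J * ‖w‖ ^ 2 ≤ (⟪w, A w⟫).re := by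
  haveI : CompleteSpace E := FiniteDimensional.complete ℂ E
  have hsym := hA.isSymmetric
  set b := hsym.eigenvectorBasis rfl with hb
  set μ := hsym.eigenvalues rfl with hμdef
  set c : EuclideanSpace ℂ (Fin (Module.finrank ℂ E)) := b.repr w with hcdef
  have h1 : ⟪w, A w⟫ = ∑ i, (starRingEnd ℂ) (c i) * ((μ i : ℂ) * c i) := by
    rw [← b.repr.inner_map_map w (A w), PiLp.inner_apply]
    congr 1
    ext i
    rw [RCLike.inner_apply, mul_comm]
    congr 1
    exact hsym.eigenvectorBasis_apply_self_apply rfl w i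
  have h2 : (⟪w, A w⟫).re = ∑ i, μ i * ‖c i‖ ^ 2 := by
    rw [h1, Complex.re_sum]
    congr 1
    ext i
    have : (starRingEnd ℂ) (c i) * ((μ i : ℂ) * c i)
        = ((μ i : ℝ) : ℂ) * ((‖c i‖ : ℝ) ^ 2 : ℝ) := by
      rw [mul_comm, mul_assoc, Complex.mul_conj]
      norm_cast
      simp [Complex.normSq_eq_norm_sq]
    rw [this]
    push_cast
    rw [Complex.re_ofReal_mul]
    norm_cast
  have hP : ∑ i, ‖c i‖ ^ 2 = ‖w‖ ^ 2 := by
    have h3 : ‖c‖ = ‖w‖ := b.repr.norm_map w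
    rw [← h3, PiLp.norm_sq_eq_of_L2]
  rw [h2, ← hP, Finset.mul_sum]
  apply Finset.sum_le_sum
  intro i _
  by_cases hμ : μ i = 0
  · have hbker : b i ∈ LinearMap.ker (A : E →ₗ[ℂ] E) := by
      rw [LinearMap.mem_ker]
      have := hsym.apply_eigenvectorBasis rfl i
      rw [← hb, ← hμdef, hμ] at this
      simpa using this
    have hci : c i = 0 := by
      rw [hcdef, b.repr_apply_apply]
      exact (Submodule.mem_orthogonal _ w).mp hw (b i) hbker
    rw [hci, hμ]
    simp
  · have hmem : ((μ i : ℝ) : ℂ) ∈ spectrum ℂ A :=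
      mem_spectrum_of_hasEigenvalue' (hsym.hasEigenvalue_eigenvalues rfl i)
    have := hgap (μ i) hmem hμ
    have h4 : (0:ℝ) ≤ ‖c i‖ ^ 2 := by positivity
    nlinarith

lemma minEig_compress_le_norm [FiniteDimensional ℂ E] (S : Submodule ℂ E)
    [S.HasOrthogonalProjection] [Nontrivial S] {A : E →L[ℂ] E} (hA : IsSelfAdjoint A) :
    minEig (compress S A) ≤ ‖A‖ := by
  haveI : CompleteSpace E := FiniteDimensional.complete ℂ E
  obtain ⟨x, hx⟩ := exists_ne (0 : S)
  have hn0 : (0:ℝ) < ‖x‖ := norm_pos_iff.mpr hx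
  set u : S := ((‖x‖ : ℂ))⁻¹ • x with hu
  have hu1 : ‖u‖ = 1 := by
    rw [hu, norm_smul]
    simp only [norm_inv, Complex.norm_real, Real.norm_eq_abs, abs_of_pos hn0]
    exact inv_mul_cancel₀ hn0.ne'
  have hu1' : ‖(u : E)‖ = 1 := by rw [← Submodule.coe_norm, hu1]
  have h1 := minEig_le_inner (compress_isSelfAdjoint S hA) hu1
  rw [inner_compress] at h1
  refine h1.trans ?_
  have h2 : |(⟪(u : E), A (u : E)⟫).re| ≤ ‖A‖ := by
    calc |(⟪(u : E), A (u : E)⟫).re| ≤ ‖(⟪(u : E), A (u : E)⟫)‖ := Complex.abs_re_le_norm _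
      _ ≤ ‖(u : E)‖ * ‖A (u : E)‖ := norm_inner_le_norm _ _
      _ ≤ ‖(u : E)‖ * (‖A‖ * ‖(u : E)‖) := by gcongr; exact A.le_opNorm _
      _ = ‖A‖ := by rw [hu1']; ring
  linarith [le_abs_self ((⟪(u : E), A (u : E)⟫).re)]

lemma projection_key (K lam a b q11 q12 q21 q22 p : ℝ) (ha : 0 ≤ a) (hb : 0 ≤ b)
    (hab1 : a ^ 2 + b ^ 2 = 1) (ha1' : a ≤ 1) (hlK : lam ≤ K) (h1K : 1 ≤ K)
    (hq11 : lam * a ^ 2 ≤ q11) (hq12 : -(K * a * b) ≤ q12) (hq21 : -(K * b * a) ≤ q21)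
    (hq22 : -(K * b * b) ≤ q22) (hp : (8 * K ^ 2 + 2 * K) * b ^ 2 ≤ p) :
    lam - 1 / 8 ≤ q11 + q12 + q21 + q22 + p := by
  have h5 : 0 ≤ (K - lam) * b ^ 2 := mul_nonneg (by linarith) (sq_nonneg _)
  have h6 : 0 ≤ 2 * K * b * (1 - a) :=
    mul_nonneg (mul_nonneg (by linarith) hb) (by linarith)
  nlinarith [sq_nonneg (8 * K * b - 1), h5, h6]

end Helpers

/-- **Projection Lemma, specialized.** Under the hypotheses of the projection lemma,
with `J = 8‖H₁‖² + 2‖H₁‖` and `‖H₁‖ ≥ 1`, one has `λ(H₁|_𝒮) − 1/8 ≤ λ(H₁ + H₂)`. -/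
theorem projection_lemma_specialized {E : Type*} [NormedAddCommGroup E]
    [InnerProductSpace ℂ E] [FiniteDimensional ℂ E]
    (H₁ H₂ : E →L[ℂ] E)
    (hH₁ : IsSelfAdjoint H₁) (hH₂ : H₂.IsPositive)
    (hnorm : 1 ≤ ‖H₁‖)
    (hgap : ∀ t : ℝ, (t : ℂ) ∈ spectrum ℂ H₂ → t ≠ 0 → 8 * ‖H₁‖ ^ 2 + 2 * ‖H₁‖ ≤ t)
    (S : Submodule ℂ E) (hS : S = LinearMap.ker (H₂ : E →ₗ[ℂ] E)) :
    minEig (compress S H₁) - 1 / 8 ≤ minEig (H₁ + H₂) := by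
  haveI : CompleteSpace E := FiniteDimensional.complete ℂ E
  rcases subsingleton_or_nontrivial E with hE | hE
  · haveI : Subsingleton S := ⟨fun x y => Subtype.ext (Subsingleton.elim _ _)⟩
    rw [minEig_subsingleton, minEig_subsingleton]
    norm_num
  · set K := ‖H₁‖ with hK
    set lam := minEig (compress S H₁) with hlam
    clear_value lam
    have hsa : IsSelfAdjoint (H₁ + H₂) := hH₁.add hH₂.isSelfAdjoint
    apply le_minEig hsa
    intro v hv
    set v₁ : E := ((S.orthogonalProjectionOnto v : S) : E) with hv₁def
    set v₂ : E := v - v₁ with hv₂def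
    have hv₁S : v₁ ∈ S := SetLike.coe_mem _
    have hv₂S : v₂ ∈ Sᗮ := by exact S.sub_starProjection_mem_orthogonal v
    have hvsum : v = v₁ + v₂ := by rw [hv₂def]; abel
    have ha0 : (0:ℝ) ≤ ‖v₁‖ := norm_nonneg _
    have hb0 : (0:ℝ) ≤ ‖v₂‖ := norm_nonneg _
    have hab : ‖v₁‖ ^ 2 + ‖v₂‖ ^ 2 = 1 := by
      have horth : (inner ℂ v₁ v₂ : ℂ) = 0 := (Submodule.mem_orthogonal S v₂).mp hv₂S v₁ hv₁S
      have hns := norm_add_sq (𝕜 := ℂ) v₁ v₂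
      rw [← hvsum, hv] at hns
      rw [horth] at hns
      simp at hns
      linarith
    have ha1 : ‖v₁‖ ≤ 1 := by nlinarith
    -- cross bounds for H₁
    have habs : ∀ x y : E, |(inner ℂ x (H₁ y) : ℂ).re| ≤ K * ‖x‖ * ‖y‖ := by
      intro x y
      calc |(inner ℂ x (H₁ y) : ℂ).re| ≤ ‖(inner ℂ x (H₁ y) : ℂ)‖ := Complex.abs_re_le_norm _
        _ ≤ ‖x‖ * ‖H₁ y‖ := norm_inner_le_norm _ _
        _ ≤ ‖x‖ * (K * ‖y‖) := by gcongr; exact H₁.le_opNorm y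
        _ = K * ‖x‖ * ‖y‖ := by ring
    -- H₂ lower bound
    have hv₁ker : H₂ v₁ = 0 := LinearMap.mem_ker.mp (hS ▸ hv₁S)
    have hH₂v : (inner ℂ v (H₂ v) : ℂ).re = (inner ℂ v₂ (H₂ v₂) : ℂ).re := by
      have h1 : H₂ v = H₂ v₂ := by rw [hvsum, map_add, hv₁ker, zero_add]
      have h2 : (inner ℂ v₁ (H₂ v₂) : ℂ) = 0 := by
        have h := (hH₂.isSelfAdjoint.isSymmetric v₁ v₂).symm
        simp only [ContinuousLinearMap.coe_coe] at h
        rw [h, hv₁ker, inner_zero_left]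
      rw [h1, hvsum, inner_add_left, h2, zero_add]
    have hgap2 : (8 * K ^ 2 + 2 * K) * ‖v₂‖ ^ 2 ≤ (inner ℂ v₂ (H₂ v₂) : ℂ).re := by
      refine gap_bound hH₂.isSelfAdjoint hgap ?_
      rw [← hS]; exact hv₂S
    -- H₁ expansion
    have hH₁v : (inner ℂ v (H₁ v) : ℂ).re =
        (inner ℂ v₁ (H₁ v₁) : ℂ).re + (inner ℂ v₁ (H₁ v₂) : ℂ).re +
        (inner ℂ v₂ (H₁ v₁) : ℂ).re + (inner ℂ v₂ (H₁ v₂) : ℂ).re := by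
      rw [hvsum, map_add, inner_add_left, inner_add_right, inner_add_right]
      simp [Complex.add_re]
      ring
    have hsplit : (inner ℂ v ((H₁ + H₂) v) : ℂ).re
        = (inner ℂ v (H₁ v) : ℂ).re + (inner ℂ v (H₂ v) : ℂ).re := by
      rw [ContinuousLinearMap.add_apply, inner_add_right, Complex.add_re]
    -- compression lower bound
    have hb₁ : lam * ‖v₁‖ ^ 2 ≤ (inner ℂ v₁ (H₁ v₁) : ℂ).re := by
      have h := minEig_smul_le (compress_isSelfAdjoint S hH₁) (⟨v₁, hv₁S⟩ : S)
      rw [inner_compress, Submodule.coe_norm] at h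
      rw [hlam]
      exact h
    have hc1 := habs v₁ (v₂); have hc2 := habs v₂ v₁; have hc3 := habs v₂ v₂
    rcases subsingleton_or_nontrivial S with hS' | hS'
    · -- trivial subspace : v₁ = 0, lam = 0
      have hlam0 : lam = 0 := by rw [hlam]; exact minEig_subsingleton _
      have hv₁0 : v₁ = 0 := by
        rw [hv₁def, Subsingleton.elim (S.orthogonalProjectionOnto v) 0]; rfl
      have ha : ‖v₁‖ = 0 := by rw [hv₁0, norm_zero]
      rw [hsplit, hH₁v, hH₂v, hlam0]
      have h5 : (inner ℂ v₂ (H₁ v₂) : ℂ).re ≥ -(K * ‖v₂‖ * ‖v₂‖) := by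
        have := neg_abs_le ((inner ℂ v₂ (H₁ v₂) : ℂ).re); linarith
      have h6 : (inner ℂ v₁ (H₁ v₂) : ℂ).re = 0 := by rw [hv₁0]; simp
      have h7 : (inner ℂ v₂ (H₁ v₁) : ℂ).re = 0 := by rw [hv₁0]; simp
      have h8 : (inner ℂ v₁ (H₁ v₁) : ℂ).re = 0 := by rw [hv₁0]; simp
      rw [h6, h7, h8]
      nlinarith [hgap2, hab, hnorm, h5, ha, sq_nonneg ‖v₂‖]
    · -- nontrivial subspace : lam ≤ K
      have hlamK : lam ≤ K := by
        rw [hlam, hK]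
        exact minEig_compress_le_norm S hH₁
      rw [hsplit, hH₁v, hH₂v]
      have hc1' : -(K * ‖v₁‖ * ‖v₂‖) ≤ (inner ℂ v₁ (H₁ v₂) : ℂ).re := neg_le_of_abs_le hc1
      have hc2' : -(K * ‖v₂‖ * ‖v₁‖) ≤ (inner ℂ v₂ (H₁ v₁) : ℂ).re := neg_le_of_abs_le hc2
      have hc3' : -(K * ‖v₂‖ * ‖v₂‖) ≤ (inner ℂ v₂ (H₁ v₂) : ℂ).re := neg_le_of_abs_le hc3
      exact projection_key K lam ‖v₁‖ ‖v₂‖ _ _ _ _ _ ha0 hb0 hab ha1 hlamK hnorm hb₁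
        hc1' hc2' hc3' hgap2
end

section
/- In the single-excitation sector, the UQI Hamiltonian H = Σ_{i=1}^{N−1} ½(X^a_i X^a_{i+1} + Y^a_i Y^a_{i+1}) ⊗ S^q_{i,i+1} acts as: H(|i⟩^a ⊗ |ψ⟩^q) = |i−1⟩^a ⊗ S_{i−1,i}†|ψ⟩ + |i+1⟩^a ⊗ S_{i,i+1}|ψ⟩ (with |0⟩^a and |N+1⟩^a interpreted as 0), where |i⟩^a denotes the state of N head qubits all in |0⟩ except the i-th in |1⟩. Hence the span of states {|i⟩^a⊗|ψ_i⟩ : |ψ_i⟩ = S_{i−1,i}…S_{1,2}|ψ₁⟩} is invariant under H and on it H acts as the path-graph hopping matrix. -/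
open Matrix

variable (N : ℕ)

/-- Head configuration with a single excitation at site `i`:  all head qubits in
`|0⟩` except the `i`-th, which is in `|1⟩`. -/
def headState (i : Fin N) : (Fin N → Fin 2) → ℂ :=
  fun f => if f = (fun k => if k = i then 1 else 0) then 1 else 0

/-- Tensor product of a head vector and a data vector. -/
def tensorState (φ ψ : (Fin N → Fin 2) → ℂ) :
    ((Fin N → Fin 2) × (Fin N → Fin 2)) → ℂ :=
  fun p => φ p.1 * ψ p.2

/-- The swap `S_{i,j}` of data qubits `i` and `j`, acting on data vectors. -/
def dataSwap (i j : Fin N) (ψ : (Fin N → Fin 2) → ℂ) : (Fin N → Fin 2) → ℂ :=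
  fun g => ψ (g ∘ Equiv.swap i j)

/-- The UQI Hamiltonian `H = Σ_{i=1}^{N−1} ½(X^a_i X^a_{i+1} + Y^a_i Y^a_{i+1}) ⊗
S^q_{i,i+1}`:  on the head qubits each term is the hopping operator
`|01⟩⟨10| + |10⟩⟨01|` at sites `i, i+1`, tensored with the swap of the data qubits
`i, i+1`. -/
noncomputable def uqiH : Matrix ((Fin N → Fin 2) × (Fin N → Fin 2))
    ((Fin N → Fin 2) × (Fin N → Fin 2)) ℂ :=
  fun p q => ∑ i ∈ (Finset.range (N - 1)).attach,
    have hi : i.1 < N - 1 := Finset.mem_range.mp i.2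
    let a : Fin N := ⟨i.1, by omega⟩
    let b : Fin N := ⟨i.1 + 1, by omega⟩
    (if ((p.1 a, p.1 b) = ((0 : Fin 2), (1 : Fin 2)) ∧ (q.1 a, q.1 b) = (1, 0)) ∨
        ((p.1 a, p.1 b) = (1, 0) ∧ (q.1 a, q.1 b) = (0, 1)) then 1 else 0) *
    (if ∀ k, k ≠ a → k ≠ b → p.1 k = q.1 k then 1 else 0) *
    (if p.2 = q.2 ∘ (Equiv.swap a b) then 1 else 0)

/-- `|ψ_i⟩ = S_{i−1,i} ⋯ S_{1,2}|ψ₁⟩` (0-indexed): the data state after the head has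
hopped to site `i`. -/
def iterSwap (ψ : (Fin N → Fin 2) → ℂ) : ℕ → ((Fin N → Fin 2) → ℂ)
  | 0 => ψ
  | k + 1 =>
    if h : k + 1 < N then dataSwap N ⟨k, by omega⟩ ⟨k + 1, h⟩ (iterSwap ψ k)
    else iterSwap ψ k

lemma indicator_eq {N : ℕ} (a b i : Fin N) (hab : a ≠ b) (f : Fin N → Fin 2) :
    ((if ((f a, f b) = ((0 : Fin 2), (1 : Fin 2)) ∧
          (((if a = i then (1 : Fin 2) else 0), (if b = i then (1 : Fin 2) else 0)) = (1, 0))) ∨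
        ((f a, f b) = (1, 0) ∧
          (((if a = i then (1 : Fin 2) else 0), (if b = i then (1 : Fin 2) else 0)) = (0, 1)))
      then (1 : ℂ) else 0) *
      (if ∀ k, k ≠ a → k ≠ b → f k = (if k = i then 1 else 0) then 1 else 0))
    = (if a = i then (if f = (fun k => if k = b then 1 else 0) then 1 else 0)
      else if b = i then (if f = (fun k => if k = a then 1 else 0) then 1 else 0) else 0) := by
  by_cases hai : a = i
  · subst hai
    have hbi : ¬ b = a := fun h => hab h.symm
    rw [if_pos rfl]
    simp only [if_pos rfl, if_neg hbi, if_true]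
    simp only [and_true, show (((1 : Fin 2), (0 : Fin 2)) = ((0 : Fin 2), (1 : Fin 2))) = False from
      eq_false (by decide), and_false, or_false]
    rw [ite_zero_mul_ite_zero, mul_one]
    have key : ((f a, f b) = ((0 : Fin 2), (1 : Fin 2)) ∧
        ∀ k, k ≠ a → k ≠ b → f k = (if k = a then 1 else 0)) ↔
        f = (fun k => if k = b then 1 else 0) := by
      constructor
      · rintro ⟨hfab, hrest⟩
        rw [Prod.mk.injEq] at hfab
        funext k
        by_cases hk : k = b
        · subst hk; simp [hfab.2]
        · rw [if_neg hk]
          by_cases hk2 : k = a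
          · subst hk2; exact hfab.1
          · rw [hrest k hk2 hk, if_neg hk2]
      · intro h
        subst h
        refine ⟨?_, ?_⟩
        · simp [hab, hbi]
        · intro k hka hkb
          simp [hkb, hka]
    simp only [key]
  · by_cases hbi : b = i
    · subst hbi
      rw [if_neg hai, if_pos rfl]
      simp only [if_pos rfl, if_neg hai, if_true]
      simp only [and_true, show (((0 : Fin 2), (1 : Fin 2)) = ((1 : Fin 2), (0 : Fin 2))) = False from
        eq_false (by decide), and_false, false_or]
      rw [ite_zero_mul_ite_zero, mul_one]
      have key : ((f a, f b) = ((1 : Fin 2), (0 : Fin 2)) ∧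
          ∀ k, k ≠ a → k ≠ b → f k = (if k = b then 1 else 0)) ↔
          f = (fun k => if k = a then 1 else 0) := by
        constructor
        · rintro ⟨hfab, hrest⟩
          rw [Prod.mk.injEq] at hfab
          funext k
          by_cases hk : k = a
          · subst hk; simp [hfab.1]
          · rw [if_neg hk]
            by_cases hk2 : k = b
            · subst hk2; exact hfab.2
            · rw [hrest k hk hk2, if_neg hk2]
        · intro h
          subst h
          refine ⟨?_, ?_⟩
          · simp [hab, Ne.symm hab]
          · intro k hka hkb
            simp [hkb, hka]
      simp only [key]
    · rw [if_neg hai, if_neg hbi]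
      have hcond : ¬ (((f a, f b) = ((0 : Fin 2), (1 : Fin 2)) ∧
            (((0 : Fin 2), (0 : Fin 2)) = ((1 : Fin 2), (0 : Fin 2)))) ∨
          ((f a, f b) = ((1 : Fin 2), (0 : Fin 2)) ∧
            (((0 : Fin 2), (0 : Fin 2)) = ((0 : Fin 2), (1 : Fin 2))))) := by
        rintro (⟨-, h⟩ | ⟨-, h⟩) <;> exact absurd h (by decide)
      rw [if_neg hcond, zero_mul, if_neg hai, if_neg hbi]

lemma swap_cond_iff {N : ℕ} (a b : Fin N) (p2 q2 : Fin N → Fin 2) :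
    (p2 = q2 ∘ (Equiv.swap a b)) ↔ q2 = p2 ∘ (Equiv.swap a b) := by
  constructor
  · intro h
    rw [h]
    funext k
    simp [Function.comp, Equiv.swap_apply_self]
  · intro h
    rw [h]
    funext k
    simp [Function.comp, Equiv.swap_apply_self]

lemma uqi_inner_sum {N : ℕ} (a b i : Fin N) (hab : a ≠ b) (φ : (Fin N → Fin 2) → ℂ)
    (p : (Fin N → Fin 2) × (Fin N → Fin 2)) :
    (∑ q : (Fin N → Fin 2) × (Fin N → Fin 2),
      ((if ((p.1 a, p.1 b) = ((0 : Fin 2), (1 : Fin 2)) ∧ (q.1 a, q.1 b) = (1, 0)) ∨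
          ((p.1 a, p.1 b) = (1, 0) ∧ (q.1 a, q.1 b) = (0, 1)) then (1 : ℂ) else 0) *
        (if ∀ k, k ≠ a → k ≠ b → p.1 k = q.1 k then 1 else 0) *
        (if p.2 = q.2 ∘ (Equiv.swap a b) then 1 else 0)) *
        tensorState N (headState N i) φ q)
    = (if a = i then headState N b p.1
       else if b = i then headState N a p.1 else 0) * φ (p.2 ∘ Equiv.swap a b) := by
  rw [Fintype.sum_prod_type]
  have step : ∀ q1 q2 : Fin N → Fin 2,
      ((if ((p.1 a, p.1 b) = ((0 : Fin 2), (1 : Fin 2)) ∧ (q1 a, q1 b) = (1, 0)) ∨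
          ((p.1 a, p.1 b) = (1, 0) ∧ (q1 a, q1 b) = (0, 1)) then (1 : ℂ) else 0) *
        (if ∀ k, k ≠ a → k ≠ b → p.1 k = q1 k then 1 else 0) *
        (if p.2 = q2 ∘ (Equiv.swap a b) then 1 else 0)) *
        tensorState N (headState N i) φ (q1, q2)
      = ((if q1 = (fun k => if k = i then (1 : Fin 2) else 0) then
            (if ((p.1 a, p.1 b) = ((0 : Fin 2), (1 : Fin 2)) ∧ (q1 a, q1 b) = (1, 0)) ∨
              ((p.1 a, p.1 b) = (1, 0) ∧ (q1 a, q1 b) = (0, 1)) then (1 : ℂ) else 0) *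
            (if ∀ k, k ≠ a → k ≠ b → p.1 k = q1 k then 1 else 0)
          else 0)) *
        (if q2 = p.2 ∘ (Equiv.swap a b) then φ q2 else 0) := by
    intro q1 q2
    simp only [tensorState, headState, swap_cond_iff]
    by_cases h1 : q1 = (fun k => if k = i then (1 : Fin 2) else 0) <;>
      by_cases h2 : q2 = p.2 ∘ (Equiv.swap a b) <;>
      simp [h1, h2] <;> ring
  simp only [step]
  rw [← Finset.sum_mul_sum]
  rw [Finset.sum_ite_eq' Finset.univ, Finset.sum_ite_eq' Finset.univ]
  simp only [Finset.mem_univ, if_true]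
  have := indicator_eq a b i hab p.1
  simp only [headState] at this ⊢
  rw [← this]

lemma mulVec_headState {N : ℕ} (i : Fin N) (φ : (Fin N → Fin 2) → ℂ) :
    (uqiH N).mulVec (tensorState N (headState N i) φ) =
      (if h : 0 < i.1 then
          tensorState N (headState N ⟨i.1 - 1, Nat.lt_of_le_of_lt (Nat.sub_le _ _) i.2⟩)
            (dataSwap N ⟨i.1 - 1, Nat.lt_of_le_of_lt (Nat.sub_le _ _) i.2⟩ i φ)
        else 0) +
      (if h : i.1 + 1 < N then
          tensorState N (headState N ⟨i.1 + 1, h⟩)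
            (dataSwap N i ⟨i.1 + 1, h⟩ φ)
        else 0) := by
  funext p
  rw [Matrix.mulVec]
  rw [show (uqiH N p) ⬝ᵥ (tensorState N (headState N i) φ) =
    ∑ q, uqiH N p q * tensorState N (headState N i) φ q from rfl]
  simp only [uqiH]
  simp only [Finset.sum_mul]
  rw [Finset.sum_comm]
  have hmem : ∀ t : {x // x ∈ Finset.range (N - 1)}, t.1 + 1 < N := fun t => by
    have := Finset.mem_range.mp t.2; omega
  refine Eq.trans (Finset.sum_congr rfl (fun t _ =>
    uqi_inner_sum (⟨t.1, by have := hmem t; omega⟩ : Fin N) (⟨t.1 + 1, hmem t⟩ : Fin N) i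
      (by intro h; have := congrArg Fin.val h; simp at this) φ p)) ?_
  have hiN : i.1 < N := i.2
  refine Eq.trans (Finset.sum_congr rfl (fun t _ => ?_))
    (?_ : (∑ t ∈ (Finset.range (N - 1)).attach,
      ((if t.1 = i.1 then headState N ⟨t.1 + 1, hmem t⟩ p.1 *
          φ (p.2 ∘ Equiv.swap (⟨t.1, by have := hmem t; omega⟩ : Fin N) ⟨t.1 + 1, hmem t⟩) else 0) +
       (if t.1 + 1 = i.1 then headState N ⟨t.1, by have := hmem t; omega⟩ p.1 *
          φ (p.2 ∘ Equiv.swap (⟨t.1, by have := hmem t; omega⟩ : Fin N) ⟨t.1 + 1, hmem t⟩) else 0))) = _)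
  · -- pointwise split
    by_cases h1 : (⟨t.1, by have := hmem t; omega⟩ : Fin N) = i
    · have e1 : t.1 = i.1 := congrArg Fin.val h1
      have e2 : ¬ (t.1 + 1 = i.1) := by omega
      rw [if_pos h1, if_pos e1, if_neg e2, add_zero]
    · have e1 : ¬ (t.1 = i.1) := fun hh => h1 (Fin.ext hh)
      rw [if_neg h1, if_neg e1, zero_add]
      by_cases h2 : (⟨t.1 + 1, hmem t⟩ : Fin N) = i
      · have e2 : t.1 + 1 = i.1 := congrArg Fin.val h2
        rw [if_pos h2, if_pos e2]
      · have e2 : ¬ (t.1 + 1 = i.1) := fun hh => h2 (Fin.ext hh)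
        rw [if_neg h2, if_neg e2, zero_mul]
  rw [Finset.sum_add_distrib]
  have hS1 : (∑ t ∈ (Finset.range (N - 1)).attach,
      (if t.1 = i.1 then headState N ⟨t.1 + 1, hmem t⟩ p.1 *
          φ (p.2 ∘ Equiv.swap (⟨t.1, by have := hmem t; omega⟩ : Fin N) ⟨t.1 + 1, hmem t⟩) else 0)) =
      (if h : i.1 + 1 < N then
          tensorState N (headState N ⟨i.1 + 1, h⟩) (dataSwap N i ⟨i.1 + 1, h⟩ φ)
        else 0) p := by
    by_cases hR : i.1 + 1 < N
    · have hmem2 : i.1 ∈ Finset.range (N - 1) := Finset.mem_range.mpr (by omega)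
      rw [Finset.sum_eq_single (⟨i.1, hmem2⟩ : {x // x ∈ Finset.range (N - 1)})]
      · rw [if_pos rfl, dif_pos hR]
        rfl
      · intro t _ hne
        rw [if_neg (fun hh : t.1 = i.1 => hne (Subtype.ext hh))]
      · intro h
        exact absurd (Finset.mem_attach _ _) h
    · rw [dif_neg hR, Finset.sum_eq_zero, Pi.zero_apply]
      intro t _
      have := hmem t
      rw [if_neg (by omega : ¬ (t.1 = i.1))]
  have hS2 : (∑ t ∈ (Finset.range (N - 1)).attach,
      (if t.1 + 1 = i.1 then headState N ⟨t.1, by have := hmem t; omega⟩ p.1 *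
          φ (p.2 ∘ Equiv.swap (⟨t.1, by have := hmem t; omega⟩ : Fin N) ⟨t.1 + 1, hmem t⟩) else 0)) =
      (if h : 0 < i.1 then
          tensorState N (headState N ⟨i.1 - 1, by omega⟩) (dataSwap N ⟨i.1 - 1, by omega⟩ i φ)
        else 0) p := by
    by_cases hL : 0 < i.1
    · have hmem2 : i.1 - 1 ∈ Finset.range (N - 1) := Finset.mem_range.mpr (by omega)
      rw [Finset.sum_eq_single (⟨i.1 - 1, hmem2⟩ : {x // x ∈ Finset.range (N - 1)})]
      · rw [if_pos (by omega : i.1 - 1 + 1 = i.1), dif_pos hL]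
        have e3 : (⟨i.1 - 1 + 1, hmem ⟨i.1 - 1, hmem2⟩⟩ : Fin N) = i := Fin.ext (by simp; omega)
        rw [e3]
        rfl
      · intro t _ hne
        rw [if_neg (fun hh : t.1 + 1 = i.1 => hne (Subtype.ext (by omega : t.1 = i.1 - 1)))]
      · intro h
        exact absurd (Finset.mem_attach _ _) h
    · rw [dif_neg hL, Finset.sum_eq_zero, Pi.zero_apply]
      intro t _
      rw [if_neg (by omega : ¬ (t.1 + 1 = i.1))]
  rw [hS1, hS2, Pi.add_apply]
  ring

lemma dataSwap_dataSwap {N : ℕ} (a b : Fin N) (φ : (Fin N → Fin 2) → ℂ) :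
    dataSwap N a b (dataSwap N a b φ) = φ := by
  funext g
  show φ ((g ∘ Equiv.swap a b) ∘ Equiv.swap a b) = φ g
  congr 1
  funext k
  simp [Function.comp, Equiv.swap_apply_self]

lemma iterSwap_succ {N : ℕ} (ψ : (Fin N → Fin 2) → ℂ) (k : ℕ) (h : k + 1 < N) :
    iterSwap N ψ (k + 1) = dataSwap N ⟨k, by omega⟩ ⟨k + 1, h⟩ (iterSwap N ψ k) := by
  rw [iterSwap, dif_pos h]

lemma part3 {N : ℕ} (ψ : (Fin N → Fin 2) → ℂ) (i : Fin N) :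
    (uqiH N).mulVec (tensorState N (headState N i) (iterSwap N ψ i.1)) =
      (if h : 0 < i.1 then
          tensorState N (headState N ⟨i.1 - 1, Nat.lt_of_le_of_lt (Nat.sub_le _ _) i.2⟩) (iterSwap N ψ (i.1 - 1))
        else 0) +
      (if h : i.1 + 1 < N then
          tensorState N (headState N ⟨i.1 + 1, h⟩) (iterSwap N ψ (i.1 + 1))
        else 0) := by
  have hiN : i.1 < N := i.2
  rw [mulVec_headState]
  congr 1
  · by_cases h : 0 < i.1
    · rw [dif_pos h, dif_pos h]
      congr 1
      have h1 : i.1 - 1 + 1 < N := by omega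
      have e2 : (⟨i.1 - 1 + 1, h1⟩ : Fin N) = i := Fin.ext (by simp; omega)
      have h5 := iterSwap_succ ψ (i.1 - 1) h1
      rw [e2] at h5
      rw [show iterSwap N ψ i.1 = iterSwap N ψ (i.1 - 1 + 1) from by
        rw [show i.1 - 1 + 1 = i.1 from by omega]]
      rw [h5, dataSwap_dataSwap]
    · rw [dif_neg h, dif_neg h]
  · by_cases h : i.1 + 1 < N
    · rw [dif_pos h, dif_pos h]
      congr 1
      rw [iterSwap_succ ψ i.1 h]
    · rw [dif_neg h, dif_neg h]


/-- In the single-excitation sector the UQI Hamiltonian acts as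
`H(|i⟩^a ⊗ |ψ⟩^q) = |i−1⟩^a ⊗ S_{i−1,i}|ψ⟩ + |i+1⟩^a ⊗ S_{i,i+1}|ψ⟩`
(terms at the chain ends interpreted as `0`); hence the span of the states
`|i⟩^a ⊗ |ψ_i⟩` with `|ψ_i⟩ = S_{i−1,i}⋯S_{1,2}|ψ₁⟩` is invariant under `H`, on
which `H` acts as the path-graph hopping matrix. -/
theorem uqiH_single_excitation_action (ψ : (Fin N → Fin 2) → ℂ) :
    (∀ (i : Fin N) (φ : (Fin N → Fin 2) → ℂ),
      (uqiH N).mulVec (tensorState N (headState N i) φ) =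
        (if h : 0 < i.1 then
            tensorState N (headState N ⟨i.1 - 1, by omega⟩)
              (dataSwap N ⟨i.1 - 1, by omega⟩ i φ)
          else 0) +
        (if h : i.1 + 1 < N then
            tensorState N (headState N ⟨i.1 + 1, h⟩)
              (dataSwap N i ⟨i.1 + 1, h⟩ φ)
          else 0)) ∧
    (∀ v ∈ Submodule.span ℂ
        (Set.range fun i : Fin N => tensorState N (headState N i) (iterSwap N ψ i.1)),
      (uqiH N).mulVec v ∈ Submodule.span ℂ
        (Set.range fun i : Fin N => tensorState N (headState N i) (iterSwap N ψ i.1))) ∧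
    (∀ i : Fin N,
      (uqiH N).mulVec (tensorState N (headState N i) (iterSwap N ψ i.1)) =
        (if h : 0 < i.1 then
            tensorState N (headState N ⟨i.1 - 1, by omega⟩) (iterSwap N ψ (i.1 - 1))
          else 0) +
        (if h : i.1 + 1 < N then
            tensorState N (headState N ⟨i.1 + 1, h⟩) (iterSwap N ψ (i.1 + 1))
          else 0)) := by
  
  refine ⟨fun i φ => mulVec_headState i φ, ?_, fun i => part3 ψ i⟩
  intro v hv
  induction hv using Submodule.span_induction with
  | mem x hx =>
    obtain ⟨j, rfl⟩ := hx
    rw [part3 ψ j]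
    apply add_mem
    · split
      · exact Submodule.subset_span ⟨⟨j.1 - 1, by omega⟩, rfl⟩
      · exact zero_mem _
    · split
      · exact Submodule.subset_span ⟨⟨j.1 + 1, by assumption⟩, rfl⟩
      · exact zero_mem _
  | zero => rw [Matrix.mulVec_zero]; exact zero_mem _
  | add x y _ _ hx hy => rw [Matrix.mulVec_add]; exact add_mem hx hy
  | smul a x _ hx => rw [Matrix.mulVec_smul]; exact Submodule.smul_mem _ _ hx
end
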